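/- Let E be a finite set with |E| = t, let M be an integer with 3 ≤ M < t, and let S be a random subset of E distributed uniformly over all M-element subsets of E. Let Δ be a family of 3-element subsets of E, let τ(S) be the number of members of Δ contained in S, and let ξ = t(t−1)(t−2)/(M(M−1)(M−2)). Then E[ξ·τ(S)] = |Δ|. -/

import Mathlib

open Finset
open scoped Classical

/-- Expectation, under the uniform distribution over the `M`-element subsets of `E`,
of the function `f`. -/
noncomputable def expUnif {α : Type*} (E : Finset α) (M : ℕ) (f : Finset α → ℝ) : ℝ :=
  (∑ S ∈ E.powersetCard M, f S) / (E.powersetCard M).card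

/-- Unbiasedness of the TRIÈST-base estimator: if `S` is a uniformly random `M`-element
subset of a `t`-element set `E` (with `3 ≤ M < t`), `Δ` is a family of `3`-element
subsets of `E`, `τ(S)` counts the members of `Δ` contained in `S`, and
`ξ = t(t-1)(t-2)/(M(M-1)(M-2))`, then `E[ξ·τ(S)] = |Δ|`. -/
lemma count_supersets {α : Type*} [DecidableEq α] (E T : Finset α) (M : ℕ)
    (hT : T ⊆ E) (hk : T.card ≤ M) :
    ((E.powersetCard M).filter (fun S => T ⊆ S)).card
      = (E.card - T.card).choose (M - T.card) := by
  rw [← card_sdiff_of_subset hT, ← card_powersetCard (M - T.card) (E \ T)]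
  apply Finset.card_bij (fun S _ => S \ T)
  · intro S hS
    simp only [mem_filter, mem_powersetCard] at hS
    obtain ⟨⟨hSE, hScard⟩, hTS⟩ := hS
    rw [mem_powersetCard]
    exact ⟨sdiff_subset_sdiff hSE Subset.rfl, by rw [card_sdiff_of_subset hTS, hScard]⟩
  · intro S₁ h₁ S₂ h₂ h
    simp only [mem_filter, mem_powersetCard] at h₁ h₂
    rw [← sdiff_union_of_subset h₁.2, ← sdiff_union_of_subset h₂.2, h]
  · intro u hu
    rw [mem_powersetCard] at hu
    obtain ⟨huE, hucard⟩ := hu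
    have hdisj : Disjoint u T := disjoint_of_subset_left huE sdiff_disjoint
    refine ⟨u ∪ T, ?_, ?_⟩
    · simp only [mem_filter, mem_powersetCard]
      refine ⟨⟨union_subset (huE.trans sdiff_subset) hT, ?_⟩, subset_union_right⟩
      rw [card_union_of_disjoint hdisj, hucard]
      omega
    · rw [union_sdiff_right, sdiff_eq_self_of_disjoint hdisj]

lemma nat_key (m s : ℕ) :
    (m + 4 + s) * (m + 3 + s) * (m + 2 + s) * ((m + 1 + s).choose m)
      = (m + 4 + s).choose (m + 3) * ((m + 3) * (m + 2) * (m + 1)) := by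
  have h1 : (m + 2 + s) * (m + 1 + s).choose m = (m + 2 + s).choose (m + 1) * (m + 1) := by
    have := Nat.add_one_mul_choose_eq (m + 1 + s) m
    simpa [Nat.succ_eq_add_one, Nat.add_right_comm] using this
  have h2 : (m + 3 + s) * (m + 2 + s).choose (m + 1)
      = (m + 3 + s).choose (m + 2) * (m + 2) := by
    have := Nat.add_one_mul_choose_eq (m + 2 + s) (m + 1)
    simpa [Nat.succ_eq_add_one, Nat.add_right_comm] using this
  have h3 : (m + 4 + s) * (m + 3 + s).choose (m + 2)
      = (m + 4 + s).choose (m + 3) * (m + 3) := by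
    have := Nat.add_one_mul_choose_eq (m + 3 + s) (m + 2)
    simpa [Nat.succ_eq_add_one, Nat.add_right_comm] using this
  calc (m + 4 + s) * (m + 3 + s) * (m + 2 + s) * ((m + 1 + s).choose m)
      = (m + 4 + s) * ((m + 3 + s) * ((m + 2 + s) * (m + 1 + s).choose m)) := by ring
    _ = (m + 4 + s) * ((m + 3 + s) * ((m + 2 + s).choose (m + 1) * (m + 1))) := by rw [h1]
    _ = (m + 4 + s) * (((m + 3 + s) * (m + 2 + s).choose (m + 1)) * (m + 1)) := by ring
    _ = (m + 4 + s) * (((m + 3 + s).choose (m + 2) * (m + 2)) * (m + 1)) := by rw [h2]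
    _ = ((m + 4 + s) * (m + 3 + s).choose (m + 2)) * ((m + 2) * (m + 1)) := by ring
    _ = ((m + 4 + s).choose (m + 3) * (m + 3)) * ((m + 2) * (m + 1)) := by rw [h3]
    _ = _ := by ring

theorem stmt1 {α : Type*} [DecidableEq α] (E : Finset α) (t M : ℕ)
    (Δ : Finset (Finset α)) (ξ : ℝ)
    (hE : E.card = t) (hM : 3 ≤ M) (hMt : M < t)
    (hΔ : ∀ T ∈ Δ, T ⊆ E ∧ T.card = 3)
    (hξ : ξ = (t : ℝ) * ((t : ℝ) - 1) * ((t : ℝ) - 2) /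
      ((M : ℝ) * ((M : ℝ) - 1) * ((M : ℝ) - 2))) :
    expUnif E M (fun S => ξ * ((Δ.filter (fun T => T ⊆ S)).card : ℝ)) = (Δ.card : ℝ) := by
  obtain ⟨m, rfl⟩ : ∃ m, M = m + 3 := ⟨M - 3, by omega⟩
  obtain ⟨s, rfl⟩ : ∃ s, t = m + 4 + s := ⟨t - (m + 4), by omega⟩
  have hsum : ∑ S ∈ E.powersetCard (m + 3), ((Δ.filter (fun T => T ⊆ S)).card : ℝ)
      = (Δ.card : ℝ) * ((m + 1 + s).choose m : ℝ) := by
    have h1 : ∀ S, ((Δ.filter (fun T => T ⊆ S)).card : ℝ)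
        = ∑ T ∈ Δ, if T ⊆ S then (1 : ℝ) else 0 := by
      intro S; rw [Finset.sum_boole]
    simp only [h1]
    rw [Finset.sum_comm]
    have h2 : ∀ T ∈ Δ, (∑ S ∈ E.powersetCard (m + 3), if T ⊆ S then (1 : ℝ) else 0)
        = ((m + 1 + s).choose m : ℝ) := by
      intro T hT
      rw [Finset.sum_boole]
      have := count_supersets E T (m + 3) (hΔ T hT).1 (by rw [(hΔ T hT).2]; omega)
      rw [this, hE, (hΔ T hT).2]
      norm_num
      congr 2 <;> omega
    rw [Finset.sum_congr rfl h2, Finset.sum_const, nsmul_eq_mul]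
  rw [expUnif, ← Finset.mul_sum, hsum, card_powersetCard, hE]
  have hch : ((m + 4 + s).choose (m + 3) : ℝ) ≠ 0 := by
    have : 0 < (m + 4 + s).choose (m + 3) := Nat.choose_pos (by omega)
    exact_mod_cast this.ne'
  have hkey : ((m + 4 + s) : ℝ) * ((m + 3 + s) : ℝ) * ((m + 2 + s) : ℝ)
      * (((m + 1 + s).choose m : ℕ) : ℝ)
      = (((m + 4 + s).choose (m + 3) : ℕ) : ℝ) * (((m + 3) : ℝ) * ((m + 2) : ℝ) * ((m + 1) : ℝ)) := by
    exact_mod_cast congrArg (Nat.cast : ℕ → ℝ) (nat_key m s)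
  rw [hξ]
  push_cast
  have hM3 : ((m : ℝ) + 3) * ((m : ℝ) + 3 - 1) * ((m : ℝ) + 3 - 2) ≠ 0 := by
    have he : ((m : ℝ) + 3) * ((m : ℝ) + 3 - 1) * ((m : ℝ) + 3 - 2)
        = ((m : ℝ) + 3) * ((m : ℝ) + 2) * ((m : ℝ) + 1) := by ring
    rw [he]; positivity
  push_cast at hkey hch
  have hA : ((m : ℝ) + 3 - 1) ≠ 0 := by have := m.cast_nonneg (α := ℝ); linarith
  have hB : ((m : ℝ) + 3 - 2) ≠ 0 := by have := m.cast_nonneg (α := ℝ); linarith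
  field_simp
  nlinarith [hkey, sq_nonneg ((Δ.card : ℝ))]
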